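/- Let τ ∈ C_b(ℝ) with τ ∘ α = τ for a homeomorphism α of ℝ, and w ∈ C_b(ℝ) with w > 0 and w^{-1} bounded. If for every ε ∈ (0,1) and every compact K ⊆ {x : |τ(x)| ≤ ε} there exists a strictly increasing sequence (n_k) in ℕ with lim_k sup_{t∈K} ∏_{j=0}^{n_k−1} |w(α^{j−n_k}(t))| = 0 and lim_k sup_{t∈K} ∏_{j=0}^{n_k−1} |w(α^j(t))|^{-1} = 0, then the operator T_{α,w}(f) := w·(f∘α) is hypercyclic on the Segal algebra 𝒜_τ. -/

import Mathlib

open Filter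

/-- `f` belongs to the Segal algebra `𝒜_τ`. -/
def MemSegal (τ f : ℝ → ℝ) : Prop :=
  Continuous f ∧ Tendsto f (cocompact ℝ) (nhds 0) ∧
    Summable (fun k : ℕ => ⨆ x : ℝ, |f x * τ x ^ k|)

/-- The Segal norm `‖f‖_τ`. -/
noncomputable def segalNorm (τ f : ℝ → ℝ) : ℝ :=
  ∑' k : ℕ, ⨆ x : ℝ, |f x * τ x ^ k|


open Set TopologicalSpace Metric

set_option synthInstance.maxHeartbeats 1000000
set_option maxHeartbeats 1000000

noncomputable section Seg

variable (τ : ℝ → ℝ)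

/-- the k-th sup seminorm -/
def Mk (h : ℝ → ℝ) (k : ℕ) : ℝ := ⨆ x : ℝ, |h x * τ x ^ k|


/-- controlled membership data -/
def Tame (h : ℝ → ℝ) : Prop :=
  (∀ k, BddAbove (Set.range fun x => |h x * τ x ^ k|)) ∧ Summable (fun k => Mk τ h k)

variable {τ}

lemma Mk_nonneg (h : ℝ → ℝ) (k : ℕ) : 0 ≤ Mk τ h k :=
  Real.iSup_nonneg fun x => abs_nonneg _

lemma le_Mk {h : ℝ → ℝ} {k : ℕ} (hb : BddAbove (Set.range fun x => |h x * τ x ^ k|)) (x : ℝ) :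
    |h x * τ x ^ k| ≤ Mk τ h k := le_ciSup hb x

lemma Mk_le {h : ℝ → ℝ} {k : ℕ} {c : ℝ} (hc : 0 ≤ c) (hx : ∀ x, |h x * τ x ^ k| ≤ c) :
    Mk τ h k ≤ c := Real.iSup_le hx hc

lemma segalNorm_nonneg' (h : ℝ → ℝ) : 0 ≤ segalNorm τ h :=
  tsum_nonneg fun k => Mk_nonneg h k

lemma Mk_le_segalNorm {h : ℝ → ℝ} (ht : Tame τ h) (k : ℕ) : Mk τ h k ≤ segalNorm τ h :=
  Summable.le_tsum ht.2 k fun j _ => Mk_nonneg h j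

lemma abs_le_Mk_zero {h : ℝ → ℝ} (hb : BddAbove (Set.range fun x => |h x * τ x ^ 0|)) (x : ℝ) :
    |h x| ≤ Mk τ h 0 := by
  have := le_Mk hb x
  simpa using this

lemma abs_le_segalNorm {h : ℝ → ℝ} (ht : Tame τ h) (x : ℝ) : |h x| ≤ segalNorm τ h :=
  (abs_le_Mk_zero (ht.1 0) x).trans (Mk_le_segalNorm ht 0)

lemma Mk_add_le {a b : ℝ → ℝ} {k : ℕ} (ha : BddAbove (Set.range fun x => |a x * τ x ^ k|))
    (hb : BddAbove (Set.range fun x => |b x * τ x ^ k|)) :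
    Mk τ (fun x => a x + b x) k ≤ Mk τ a k + Mk τ b k := by
  apply Mk_le (add_nonneg (Mk_nonneg a k) (Mk_nonneg b k))
  intro x
  calc |(a x + b x) * τ x ^ k| = |a x * τ x ^ k + b x * τ x ^ k| := by ring_nf
    _ ≤ |a x * τ x ^ k| + |b x * τ x ^ k| := abs_add_le _ _
    _ ≤ Mk τ a k + Mk τ b k := add_le_add (le_Mk ha x) (le_Mk hb x)

lemma Tame.add {a b : ℝ → ℝ} (ha : Tame τ a) (hb : Tame τ b) :
    Tame τ (fun x => a x + b x) := by
  constructor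
  · intro k
    refine ⟨Mk τ a k + Mk τ b k, ?_⟩
    rintro y ⟨x, rfl⟩
    calc |(a x + b x) * τ x ^ k| = |a x * τ x ^ k + b x * τ x ^ k| := by ring_nf
      _ ≤ |a x * τ x ^ k| + |b x * τ x ^ k| := abs_add_le _ _
      _ ≤ Mk τ a k + Mk τ b k := add_le_add (le_Mk (ha.1 k) x) (le_Mk (hb.1 k) x)
  · exact Summable.of_nonneg_of_le (fun k => Mk_nonneg _ k)
      (fun k => Mk_add_le (ha.1 k) (hb.1 k)) (ha.2.add hb.2)

lemma Tame.neg {a : ℝ → ℝ} (ha : Tame τ a) : Tame τ (fun x => -a x) := by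
  have key : ∀ k x, |(-a x) * τ x ^ k| = |a x * τ x ^ k| := by
    intro k x; rw [neg_mul, abs_neg]
  constructor
  · intro k; convert ha.1 k using 2; funext x; exact key k x
  · convert ha.2 using 2 with k
    unfold Mk; congr 1; funext x; exact key k x

lemma segalNorm_neg (a : ℝ → ℝ) : segalNorm τ (fun x => -a x) = segalNorm τ a := by
  unfold segalNorm
  congr 1; funext k; congr 1; funext x; rw [neg_mul, abs_neg]

lemma Tame.sub {a b : ℝ → ℝ} (ha : Tame τ a) (hb : Tame τ b) :
    Tame τ (fun x => a x - b x) := by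
  have := ha.add hb.neg
  simpa [sub_eq_add_neg] using this

lemma segalNorm_add_le {a b : ℝ → ℝ} (ha : Tame τ a) (hb : Tame τ b) :
    segalNorm τ (fun x => a x + b x) ≤ segalNorm τ a + segalNorm τ b := by
  have h1 : Summable (fun k => Mk τ (fun x => a x + b x) k) := (ha.add hb).2
  calc segalNorm τ (fun x => a x + b x)
      ≤ ∑' k, (Mk τ a k + Mk τ b k) :=
        Summable.tsum_le_tsum (fun k => Mk_add_le (ha.1 k) (hb.1 k)) h1 (ha.2.add hb.2)
    _ = segalNorm τ a + segalNorm τ b := Summable.tsum_add ha.2 hb.2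

lemma segalNorm_sub_comm (a b : ℝ → ℝ) :
    segalNorm τ (fun x => a x - b x) = segalNorm τ (fun x => b x - a x) := by
  rw [← segalNorm_neg (fun x => b x - a x)]
  congr 1; funext x; ring

lemma segalNorm_triangle {a b c : ℝ → ℝ} (hab : Tame τ (fun x => a x - b x))
    (hbc : Tame τ (fun x => b x - c x)) :
    segalNorm τ (fun x => a x - c x) ≤
      segalNorm τ (fun x => a x - b x) + segalNorm τ (fun x => b x - c x) := by
  have : (fun x => a x - c x) = fun x => (a x - b x) + (b x - c x) := by funext x; ring
  rw [this]
  exact segalNorm_add_le hab hbc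

end Seg

noncomputable section Seg2

variable {τ : ℝ → ℝ}

/-- nicely supported functions -/
def Nice (τ h : ℝ → ℝ) : Prop :=
  Continuous h ∧ ∃ ε K, 0 < ε ∧ ε < 1 ∧ IsCompact K ∧
    (∀ x, x ∉ K → h x = 0) ∧ (∀ x ∈ K, |τ x| ≤ ε)

lemma nice_zero : Nice τ (fun _ => 0) :=
  ⟨continuous_const, 1/2, ∅, by norm_num, by norm_num, isCompact_empty,
    fun _ _ => rfl, fun x hx => absurd hx (Set.notMem_empty x)⟩

lemma bound_of_c0 {h : ℝ → ℝ} (hc : Continuous h) (h0 : Tendsto h (cocompact ℝ) (nhds 0)) :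
    ∃ C, 0 ≤ C ∧ ∀ x, |h x| ≤ C := by
  have h1 : {x : ℝ | dist (h x) 0 < 1} ∈ cocompact ℝ :=
    h0 (Metric.ball_mem_nhds 0 one_pos)
  obtain ⟨K, hK, hKs⟩ := Filter.mem_cocompact.1 h1
  obtain ⟨C, hC⟩ := hK.exists_bound_of_continuousOn hc.continuousOn
  refine ⟨max C 1, le_trans one_pos.le (le_max_right _ _), fun x => ?_⟩
  by_cases hx : x ∈ K
  · exact le_trans (by simpa using hC x hx) (le_max_left _ _)
  · have := hKs hx
    simp only [Set.mem_setOf_eq, Real.dist_eq, sub_zero] at this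
    exact le_trans this.le (le_max_right _ _)

lemma tame_of_memSegal (hτb : ∃ C, ∀ x, |τ x| ≤ C) {h : ℝ → ℝ} (hm : MemSegal τ h) :
    Tame τ h := by
  obtain ⟨C, hC0, hC⟩ := bound_of_c0 hm.1 hm.2.1
  obtain ⟨Cτ, hCτ⟩ := hτb
  have hCτ0 : 0 ≤ Cτ := le_trans (abs_nonneg _) (hCτ 0)
  refine ⟨fun k => ⟨C * Cτ ^ k, ?_⟩, hm.2.2⟩
  rintro y ⟨x, rfl⟩
  show |h x * τ x ^ k| ≤ C * Cτ ^ k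
  rw [abs_mul, abs_pow]
  exact mul_le_mul (hC x) (pow_le_pow_left₀ (abs_nonneg _) (hCτ x) k) (by positivity) hC0

lemma Nice.bounded {h : ℝ → ℝ} (hn : Nice τ h) : ∃ C, 0 ≤ C ∧ ∀ x, |h x| ≤ C := by
  obtain ⟨hc, ε, K, hε0, hε1, hK, hsupp, hτK⟩ := hn
  obtain ⟨C, hC⟩ := hK.exists_bound_of_continuousOn hc.continuousOn
  refine ⟨max C 0, le_max_right _ _, fun x => ?_⟩
  by_cases hx : x ∈ K
  · exact le_trans (by simpa using hC x hx) (le_max_left _ _)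
  · simp [hsupp x hx]

lemma Mk_le_geom {h : ℝ → ℝ} {C ε : ℝ} (hC : ∀ x, |h x| ≤ C)
    (hsup : ∀ x, h x ≠ 0 → |τ x| ≤ ε) (hε0 : 0 ≤ ε) (k : ℕ) :
    Mk τ h k ≤ C * ε ^ k := by
  have hC0 : 0 ≤ C := le_trans (abs_nonneg _) (hC 0)
  apply Mk_le (by positivity)
  intro x
  by_cases hx : h x = 0
  · simp [hx]; positivity
  · rw [abs_mul, abs_pow]
    exact mul_le_mul (hC x) (pow_le_pow_left₀ (abs_nonneg _) (hsup x hx) k) (by positivity) hC0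

lemma segalNorm_le_geom {h : ℝ → ℝ} {C ε : ℝ} (hC : ∀ x, |h x| ≤ C)
    (hsup : ∀ x, h x ≠ 0 → |τ x| ≤ ε) (hε0 : 0 ≤ ε) (hε1 : ε < 1) :
    segalNorm τ h ≤ C * (1 - ε)⁻¹ := by
  have hC0 : 0 ≤ C := le_trans (abs_nonneg _) (hC 0)
  have hsum : Summable (fun k : ℕ => C * ε ^ k) :=
    (summable_geometric_of_lt_one hε0 hε1).mul_left C
  have h1 : Summable (fun k => Mk τ h k) :=
    Summable.of_nonneg_of_le (fun k => Mk_nonneg h k) (Mk_le_geom hC hsup hε0) hsum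
  calc segalNorm τ h ≤ ∑' k : ℕ, C * ε ^ k :=
        Summable.tsum_le_tsum (Mk_le_geom hC hsup hε0) h1 hsum
    _ = C * (1 - ε)⁻¹ := by rw [tsum_mul_left, tsum_geometric_of_lt_one hε0 hε1]

lemma Nice.memSegal {h : ℝ → ℝ} (hn : Nice τ h) : MemSegal τ h := by
  obtain ⟨C, hC0, hC⟩ := hn.bounded
  obtain ⟨hc, ε, K, hε0, hε1, hK, hsupp, hτK⟩ := hn
  refine ⟨hc, ?_, ?_⟩
  · apply Tendsto.congr' _ (tendsto_const_nhds (α := ℝ))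
    exact Filter.mem_of_superset (Filter.mem_cocompact.2 ⟨K, hK, subset_rfl⟩)
      (fun x hx => (hsupp x hx).symm)
  · have hsup : ∀ x, h x ≠ 0 → |τ x| ≤ ε := by
      intro x hx
      by_cases hxK : x ∈ K
      · exact hτK x hxK
      · exact absurd (hsupp x hxK) hx
    exact Summable.of_nonneg_of_le (fun k => Mk_nonneg h k)
      (Mk_le_geom hC hsup hε0.le)
      ((summable_geometric_of_lt_one hε0.le hε1).mul_left C)

lemma Nice.tame (hτb : ∃ C, ∀ x, |τ x| ≤ C) {h : ℝ → ℝ} (hn : Nice τ h) : Tame τ h :=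
  tame_of_memSegal hτb hn.memSegal

lemma Nice.segalNorm_bound {h : ℝ → ℝ} (hn : Nice τ h) {ε : ℝ} (hε1 : ε < 1)
    (hsup : ∀ x, h x ≠ 0 → |τ x| ≤ ε) {C : ℝ} (hC : ∀ x, |h x| ≤ C) (hε0 : 0 ≤ ε) :
    segalNorm τ h ≤ C * (1 - ε)⁻¹ := segalNorm_le_geom hC hsup hε0 hε1

end Seg2

noncomputable section Seg3

variable {τ w : ℝ → ℝ} {α : ℝ ≃ₜ ℝ}

def TT (w : ℝ → ℝ) (α : ℝ ≃ₜ ℝ) : (ℝ → ℝ) → (ℝ → ℝ) := fun F => fun y => w y * F (α y)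

def SS (w : ℝ → ℝ) (α : ℝ ≃ₜ ℝ) : (ℝ → ℝ) → (ℝ → ℝ) :=
  fun F => fun y => (w (α.symm y))⁻¹ * F (α.symm y)

lemma tau_invar_iter (hinv : ∀ x, τ (α x) = τ x) : ∀ n x, τ ((⇑α)^[n] x) = τ x := by
  intro n
  induction n with
  | zero => simp
  | succ n ih => intro x; rw [Function.iterate_succ_apply, ih, hinv]

lemma tau_invar_symm (hinv : ∀ x, τ (α x) = τ x) : ∀ x, τ (α.symm x) = τ x := by
  intro x
  conv_rhs => rw [← α.apply_symm_apply x, hinv]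

lemma tau_invar_symm_iter (hinv : ∀ x, τ (α x) = τ x) : ∀ n x, τ ((⇑α.symm)^[n] x) = τ x := by
  intro n
  induction n with
  | zero => simp
  | succ n ih => intro x; rw [Function.iterate_succ_apply, ih, tau_invar_symm hinv]

lemma symm_iter_apply_iter (n : ℕ) (x : ℝ) : (⇑α.symm)^[n] ((⇑α)^[n] x) = x := by
  induction n with
  | zero => simp
  | succ n ih =>
    rw [Function.iterate_succ_apply, Function.iterate_succ_apply', α.symm_apply_apply, ih]

lemma iter_apply_symm_iter (n : ℕ) (x : ℝ) : (⇑α)^[n] ((⇑α.symm)^[n] x) = x := by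
  induction n with
  | zero => simp
  | succ n ih =>
    rw [Function.iterate_succ_apply, Function.iterate_succ_apply', α.apply_symm_apply, ih]

lemma zpow_natCast_apply (n : ℕ) (t : ℝ) : (α.toEquiv ^ (n : ℤ)) t = (⇑α)^[n] t := by
  rw [zpow_natCast]
  exact congrFun (Equiv.Perm.coe_pow α.toEquiv n) t

lemma toEquiv_inv : (α.toEquiv)⁻¹ = α.symm.toEquiv := rfl

lemma zpow_neg_natCast_apply (n : ℕ) (t : ℝ) : (α.toEquiv ^ (-(n : ℤ))) t = (⇑α.symm)^[n] t := by
  rw [zpow_neg, zpow_natCast, ← inv_pow, toEquiv_inv]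
  exact congrFun (Equiv.Perm.coe_pow α.symm.toEquiv n) t

lemma zpow_sub_apply (j n : ℕ) (t : ℝ) :
    (α.toEquiv ^ ((j : ℤ) - (n : ℤ))) t = (⇑α)^[j] ((⇑α.symm)^[n] t) := by
  have h : ((j : ℤ) - (n : ℤ)) = (j : ℤ) + (-(n : ℤ)) := by ring
  rw [h, zpow_add, Equiv.Perm.mul_apply, zpow_neg_natCast_apply, zpow_natCast_apply]

lemma iter_T (n : ℕ) (h : ℝ → ℝ) (x : ℝ) :
    (TT w α)^[n] h x = (∏ j ∈ Finset.range n, w ((⇑α)^[j] x)) * h ((⇑α)^[n] x) := by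
  induction n generalizing x with
  | zero => simp
  | succ n ih =>
    rw [Function.iterate_succ_apply']
    show w x * ((TT w α)^[n] h) (α x) = _
    rw [ih]
    have e1 : ∀ j : ℕ, (⇑α)^[j] (α x) = (⇑α)^[j+1] x :=
      fun j => (Function.iterate_succ_apply (⇑α) j x).symm
    simp only [e1]
    rw [Finset.prod_range_succ']
    simp only [Function.iterate_zero_apply]
    ring

lemma iter_S (n : ℕ) (h : ℝ → ℝ) (x : ℝ) :
    (SS w α)^[n] h x =
      (∏ j ∈ Finset.range n, (w ((⇑α.symm)^[j+1] x))⁻¹) * h ((⇑α.symm)^[n] x) := by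
  induction n generalizing x with
  | zero => simp
  | succ n ih =>
    rw [Function.iterate_succ_apply']
    show (w (α.symm x))⁻¹ * ((SS w α)^[n] h) (α.symm x) = _
    rw [ih]
    have e1 : ∀ j : ℕ, (⇑α.symm)^[j] (α.symm x) = (⇑α.symm)^[j+1] x :=
      fun j => (Function.iterate_succ_apply (⇑α.symm) j x).symm
    simp only [e1]
    rw [Finset.prod_range_succ']
    simp only [Function.iterate_succ_apply, Function.iterate_zero_apply]
    ring

lemma T_S_apply (hwpos : ∀ x, 0 < w x) (h : ℝ → ℝ) : TT w α (SS w α h) = h := by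
  funext x
  show w x * ((w (α.symm (α x)))⁻¹ * h (α.symm (α x))) = h x
  rw [α.symm_apply_apply]
  rw [← mul_assoc, mul_inv_cancel₀ (hwpos x).ne', one_mul]

lemma iter_T_S (hwpos : ∀ x, 0 < w x) (n : ℕ) (h : ℝ → ℝ) :
    (TT w α)^[n] ((SS w α)^[n] h) = h := by
  induction n with
  | zero => simp
  | succ n ih =>
    rw [Function.iterate_succ_apply' (SS w α), Function.iterate_succ_apply (TT w α),
      T_S_apply hwpos]
    exact ih

lemma iter_T_sub (n : ℕ) (a b : ℝ → ℝ) (x : ℝ) :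
    (TT w α)^[n] (fun y => a y - b y) x = (TT w α)^[n] a x - (TT w α)^[n] b x := by
  rw [iter_T, iter_T, iter_T]
  ring

end Seg3

noncomputable section Seg4

variable {τ w : ℝ → ℝ} {α : ℝ ≃ₜ ℝ}

lemma KSup_nonneg {K : Set ℝ} {F : ℝ → ℝ} (hF : ∀ t, 0 ≤ F t) : 0 ≤ ⨆ t ∈ K, F t :=
  Real.iSup_nonneg fun t => Real.iSup_nonneg fun _ => hF t

lemma le_KSup {K : Set ℝ} {F : ℝ → ℝ} {c : ℝ} (hc : ∀ t, F t ≤ c) (hc0 : 0 ≤ c)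
    {t : ℝ} (ht : t ∈ K) : F t ≤ ⨆ t ∈ K, F t := by
  have h1 : (⨆ _ : t ∈ K, F t) = F t := ciSup_pos (f := fun _ => F t) ht
  rw [← h1]
  refine le_ciSup (f := fun t => ⨆ _ : t ∈ K, F t) ⟨max c 0, ?_⟩ t
  rintro y ⟨s, rfl⟩
  show (⨆ _ : s ∈ K, F s) ≤ max c 0
  by_cases hs : s ∈ K
  · rw [ciSup_pos (f := fun _ => F s) hs]
    exact le_trans (hc s) (le_max_left c 0)
  · have : IsEmpty (s ∈ K) := isEmpty_Prop.mpr hs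
    rw [Real.iSup_of_isEmpty]
    exact le_max_right c 0

lemma Mk_T_le (hinv : ∀ x, τ (α x) = τ x) {C : ℝ} (hC : ∀ x, |w x| ≤ C)
    {h : ℝ → ℝ} (ht : Tame τ h) (k : ℕ) :
    Mk τ (TT w α h) k ≤ C * Mk τ h k := by
  have hC0 : 0 ≤ C := le_trans (abs_nonneg _) (hC 0)
  apply Mk_le (mul_nonneg hC0 (Mk_nonneg h k))
  intro x
  show |w x * h (α x) * τ x ^ k| ≤ C * Mk τ h k
  rw [mul_assoc, abs_mul, ← hinv x]
  exact mul_le_mul (hC x) (le_Mk (ht.1 k) (α x)) (abs_nonneg _) hC0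

lemma Tame.Tstep (hinv : ∀ x, τ (α x) = τ x) {C : ℝ} (hC : ∀ x, |w x| ≤ C)
    {h : ℝ → ℝ} (ht : Tame τ h) : Tame τ (TT w α h) := by
  have hC0 : 0 ≤ C := le_trans (abs_nonneg _) (hC 0)
  constructor
  · intro k
    refine ⟨C * Mk τ h k, ?_⟩
    rintro y ⟨x, rfl⟩
    show |w x * h (α x) * τ x ^ k| ≤ C * Mk τ h k
    rw [mul_assoc, abs_mul, ← hinv x]
    exact mul_le_mul (hC x) (le_Mk (ht.1 k) (α x)) (abs_nonneg _) hC0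
  · exact Summable.of_nonneg_of_le (fun k => Mk_nonneg _ k) (Mk_T_le hinv hC ht)
      (ht.2.mul_left C)

lemma segalNorm_T_le (hinv : ∀ x, τ (α x) = τ x) {C : ℝ} (hC : ∀ x, |w x| ≤ C)
    {h : ℝ → ℝ} (ht : Tame τ h) :
    segalNorm τ (TT w α h) ≤ C * segalNorm τ h := by
  calc segalNorm τ (TT w α h) ≤ ∑' k, C * Mk τ h k :=
        Summable.tsum_le_tsum (Mk_T_le hinv hC ht) (ht.Tstep hinv hC).2 (ht.2.mul_left C)
    _ = C * segalNorm τ h := tsum_mul_left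

lemma Tame.iterT (hinv : ∀ x, τ (α x) = τ x) {C : ℝ} (hC : ∀ x, |w x| ≤ C)
    {h : ℝ → ℝ} (ht : Tame τ h) (n : ℕ) : Tame τ ((TT w α)^[n] h) := by
  induction n with
  | zero => exact ht
  | succ n ih => rw [Function.iterate_succ_apply']; exact ih.Tstep hinv hC

lemma segalNorm_iterT_le_pow (hinv : ∀ x, τ (α x) = τ x) {C : ℝ} (hC : ∀ x, |w x| ≤ C)
    {h : ℝ → ℝ} (ht : Tame τ h) (n : ℕ) :
    segalNorm τ ((TT w α)^[n] h) ≤ C ^ n * segalNorm τ h := by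
  have hC0 : 0 ≤ C := le_trans (abs_nonneg _) (hC 0)
  induction n with
  | zero => simp
  | succ n ih =>
    rw [Function.iterate_succ_apply', pow_succ]
    calc segalNorm τ (TT w α ((TT w α)^[n] h)) ≤ C * segalNorm τ ((TT w α)^[n] h) :=
          segalNorm_T_le hinv hC (ht.iterT hinv hC n)
      _ ≤ C * (C ^ n * segalNorm τ h) := by
          apply mul_le_mul_of_nonneg_left ih hC0
      _ = C ^ n * C * segalNorm τ h := by ring

/-- Main bound for `T^n` of a function supported in `K`. -/
lemma segalNorm_iterT_le (hinv : ∀ x, τ (α x) = τ x) {C : ℝ} (hC : ∀ x, |w x| ≤ C)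
    {h : ℝ → ℝ} {K : Set ℝ} (hK : ∀ x, x ∉ K → h x = 0) (ht : Tame τ h) (n : ℕ) :
    segalNorm τ ((TT w α)^[n] h) ≤
      (⨆ t ∈ K, ∏ j ∈ Finset.range n, |w ((α.toEquiv ^ ((j : ℤ) - (n : ℤ))) t)|) *
        segalNorm τ h := by
  have hC0 : 0 ≤ C := le_trans (abs_nonneg _) (hC 0)
  set P : ℝ → ℝ := fun t => ∏ j ∈ Finset.range n, |w ((α.toEquiv ^ ((j : ℤ) - (n : ℤ))) t)|
    with hP
  have hPnn : ∀ t, 0 ≤ P t := fun t => Finset.prod_nonneg fun j _ => abs_nonneg _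
  have hPb : ∀ t, P t ≤ C ^ n := by
    intro t
    calc P t ≤ ∏ _j ∈ Finset.range n, C :=
          Finset.prod_le_prod (fun j _ => abs_nonneg _) (fun j _ => hC _)
      _ = C ^ n := by simp
  have hB0 : 0 ≤ ⨆ t ∈ K, P t := KSup_nonneg hPnn
  have key : ∀ k x, |(TT w α)^[n] h x * τ x ^ k| ≤ (⨆ t ∈ K, P t) * Mk τ h k := by
    intro k x
    rw [iter_T]
    by_cases hx : (⇑α)^[n] x ∈ K
    · set t := (⇑α)^[n] x with htdef
      have hzp : ∀ j : ℕ, (α.toEquiv ^ ((j : ℤ) - (n : ℤ))) t = (⇑α)^[j] x := by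
        intro j
        rw [zpow_sub_apply, htdef, symm_iter_apply_iter]
      have habs : |(∏ j ∈ Finset.range n, w ((⇑α)^[j] x)) * h t * τ x ^ k|
          = P t * |h t * τ t ^ k| := by
        rw [mul_assoc, abs_mul, Finset.abs_prod]
        congr 1
        · exact Finset.prod_congr rfl fun j _ => by rw [hzp j]
        · rw [show τ t = τ x from tau_invar_iter hinv n x]
      rw [habs]
      exact mul_le_mul (le_KSup hPb (by positivity) hx) (le_Mk (ht.1 k) t)
        (abs_nonneg _) hB0
    · rw [hK _ hx]
      simp only [mul_zero, zero_mul, abs_zero]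
      exact mul_nonneg hB0 (Mk_nonneg h k)
  have hMk : ∀ k, Mk τ ((TT w α)^[n] h) k ≤ (⨆ t ∈ K, P t) * Mk τ h k := fun k =>
    Mk_le (mul_nonneg hB0 (Mk_nonneg h k)) (key k)
  calc segalNorm τ ((TT w α)^[n] h) ≤ ∑' k, (⨆ t ∈ K, P t) * Mk τ h k :=
        Summable.tsum_le_tsum hMk (ht.iterT hinv hC n).2 (ht.2.mul_left _)
    _ = (⨆ t ∈ K, P t) * segalNorm τ h := tsum_mul_left

lemma symm_iter_apply_iter_of_le {m n : ℕ} (hmn : m ≤ n) (t : ℝ) :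
    (⇑α.symm)^[m] ((⇑α)^[n] t) = (⇑α)^[n - m] t := by
  conv_lhs => rw [show n = m + (n - m) from (Nat.add_sub_cancel' hmn).symm]
  rw [Function.iterate_add_apply, symm_iter_apply_iter]

/-- Main bound for `S^n` of a function supported in `K`. -/
lemma segalNorm_iterS_le (hinv : ∀ x, τ (α x) = τ x) (hwpos : ∀ x, 0 < w x)
    {C : ℝ} (hC : ∀ x, |w x|⁻¹ ≤ C)
    {h : ℝ → ℝ} {K : Set ℝ} (hK : ∀ x, x ∉ K → h x = 0) (ht : Tame τ h) (n : ℕ) :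
    segalNorm τ ((SS w α)^[n] h) ≤
      (⨆ t ∈ K, ∏ j ∈ Finset.range n, |w ((α.toEquiv ^ (j : ℤ)) t)|⁻¹) *
        segalNorm τ h := by
  have hC0 : 0 ≤ C := le_trans (inv_nonneg.mpr (abs_nonneg _)) (hC 0)
  set Q : ℝ → ℝ := fun t => ∏ j ∈ Finset.range n, |w ((α.toEquiv ^ (j : ℤ)) t)|⁻¹ with hQ
  have hQnn : ∀ t, 0 ≤ Q t := fun t =>
    Finset.prod_nonneg fun j _ => inv_nonneg.mpr (abs_nonneg _)
  have hQb : ∀ t, Q t ≤ C ^ n := by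
    intro t
    calc Q t ≤ ∏ _j ∈ Finset.range n, C :=
          Finset.prod_le_prod (fun j _ => inv_nonneg.mpr (abs_nonneg _)) (fun j _ => hC _)
      _ = C ^ n := by simp
  have hD0 : 0 ≤ ⨆ t ∈ K, Q t := KSup_nonneg hQnn
  have key : ∀ k x, |(SS w α)^[n] h x * τ x ^ k| ≤ (⨆ t ∈ K, Q t) * Mk τ h k := by
    intro k x
    rw [iter_S]
    by_cases hx : (⇑α.symm)^[n] x ∈ K
    · set t := (⇑α.symm)^[n] x with htdef
      have hxt : x = (⇑α)^[n] t := by rw [htdef, iter_apply_symm_iter]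
      have hterm : ∀ j ∈ Finset.range n,
          |(w ((⇑α.symm)^[j+1] x))⁻¹| = |(w ((⇑α)^[n - 1 - j] t))⁻¹| := by
        intro j hj
        have hj' : j + 1 ≤ n := Finset.mem_range.1 hj
        rw [hxt, symm_iter_apply_iter_of_le hj']
        have e : n - (j + 1) = n - 1 - j := by omega
        rw [e]
      have habs : |(∏ j ∈ Finset.range n, (w ((⇑α.symm)^[j+1] x))⁻¹) * h t * τ x ^ k|
          = Q t * |h t * τ t ^ k| := by
        rw [mul_assoc, abs_mul, Finset.abs_prod]
        congr 1
        · rw [Finset.prod_congr rfl hterm]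
          rw [show (∏ j ∈ Finset.range n, |(w ((⇑α)^[n - 1 - j] t))⁻¹|)
              = ∏ j ∈ Finset.range n, |(w ((⇑α)^[j] t))⁻¹| from
            Finset.prod_range_reflect (fun j => |(w ((⇑α)^[j] t))⁻¹|) n]
          apply Finset.prod_congr rfl
          intro j _
          rw [abs_inv, zpow_natCast_apply]
        · rw [show τ t = τ x from tau_invar_symm_iter hinv n x]
      rw [habs]
      exact mul_le_mul (le_KSup hQb (by positivity) hx) (le_Mk (ht.1 k) t)
        (abs_nonneg _) hD0
    · rw [hK _ hx]
      simp only [mul_zero, zero_mul, abs_zero]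
      exact mul_nonneg hD0 (Mk_nonneg h k)
  have hMk : ∀ k, Mk τ ((SS w α)^[n] h) k ≤ (⨆ t ∈ K, Q t) * Mk τ h k := fun k =>
    Mk_le (mul_nonneg hD0 (Mk_nonneg h k)) (key k)
  have hsum : Summable fun k => Mk τ ((SS w α)^[n] h) k :=
    Summable.of_nonneg_of_le (fun k => Mk_nonneg _ k) hMk (ht.2.mul_left _)
  calc segalNorm τ ((SS w α)^[n] h) ≤ ∑' k, (⨆ t ∈ K, Q t) * Mk τ h k :=
        Summable.tsum_le_tsum hMk hsum (ht.2.mul_left _)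
    _ = (⨆ t ∈ K, Q t) * segalNorm τ h := tsum_mul_left

lemma Nice.Tstep (hτinv : ∀ x, τ (α x) = τ x) (hwc : Continuous w)
    {h : ℝ → ℝ} (hn : Nice τ h) : Nice τ (TT w α h) := by
  obtain ⟨hc, ε, K, hε0, hε1, hK, hsupp, hτK⟩ := hn
  refine ⟨hwc.mul (hc.comp α.continuous), ε, ⇑α ⁻¹' K, hε0, hε1,
    α.isCompact_preimage.mpr hK, ?_, ?_⟩
  · intro x hx
    show w x * h (α x) = 0
    rw [hsupp (α x) hx, mul_zero]
  · intro x hx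
    rw [← hτinv x]
    exact hτK (α x) hx

lemma Nice.Sstep (hτinv : ∀ x, τ (α x) = τ x) (hwc : Continuous w) (hwpos : ∀ x, 0 < w x)
    {h : ℝ → ℝ} (hn : Nice τ h) : Nice τ (SS w α h) := by
  obtain ⟨hc, ε, K, hε0, hε1, hK, hsupp, hτK⟩ := hn
  refine ⟨Continuous.mul ((hwc.comp α.continuous_symm).inv₀ fun x => (hwpos _).ne')
      (hc.comp α.continuous_symm), ε, ⇑α.symm ⁻¹' K, hε0, hε1,
    α.symm.isCompact_preimage.mpr hK, ?_, ?_⟩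
  · intro x hx
    show (w (α.symm x))⁻¹ * h (α.symm x) = 0
    rw [hsupp (α.symm x) hx, mul_zero]
  · intro x hx
    rw [← tau_invar_symm hτinv x]
    exact hτK (α.symm x) hx

lemma Nice.iterT (hτinv : ∀ x, τ (α x) = τ x) (hwc : Continuous w)
    {h : ℝ → ℝ} (hn : Nice τ h) (n : ℕ) : Nice τ ((TT w α)^[n] h) := by
  induction n with
  | zero => exact hn
  | succ n ih => rw [Function.iterate_succ_apply']; exact ih.Tstep hτinv hwc

lemma Nice.iterS (hτinv : ∀ x, τ (α x) = τ x) (hwc : Continuous w) (hwpos : ∀ x, 0 < w x)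
    {h : ℝ → ℝ} (hn : Nice τ h) (n : ℕ) : Nice τ ((SS w α)^[n] h) := by
  induction n with
  | zero => exact hn
  | succ n ih => rw [Function.iterate_succ_apply']; exact ih.Sstep hτinv hwc hwpos

lemma Nice.add {a b : ℝ → ℝ} (ha : Nice τ a) (hb : Nice τ b) :
    Nice τ (fun x => a x + b x) := by
  obtain ⟨hca, ε₁, K₁, hε₁0, hε₁1, hK₁, hsupp₁, hτ₁⟩ := ha
  obtain ⟨hcb, ε₂, K₂, hε₂0, hε₂1, hK₂, hsupp₂, hτ₂⟩ := hb
  refine ⟨hca.add hcb, max ε₁ ε₂, K₁ ∪ K₂, lt_max_of_lt_left hε₁0, max_lt hε₁1 hε₂1,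
    hK₁.union hK₂, ?_, ?_⟩
  · intro x hx
    show a x + b x = 0
    rw [hsupp₁ x fun h => hx (Or.inl h), hsupp₂ x fun h => hx (Or.inr h), add_zero]
  · rintro x (hx | hx)
    · exact le_trans (hτ₁ x hx) (le_max_left _ _)
    · exact le_trans (hτ₂ x hx) (le_max_right _ _)

end Seg4

noncomputable section Seg5

variable {τ : ℝ → ℝ}

def clamp (s : ℝ) : ℝ := max 0 (min 1 s)

lemma clamp_nonneg (s : ℝ) : 0 ≤ clamp s := le_max_left _ _

lemma clamp_le_one (s : ℝ) : clamp s ≤ 1 := max_le zero_le_one (min_le_left _ _)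

lemma clamp_eq_one {s : ℝ} (hs : 1 ≤ s) : clamp s = 1 := by
  unfold clamp
  rw [min_eq_left hs, max_eq_right zero_le_one]

lemma clamp_eq_zero {s : ℝ} (hs : s ≤ 0) : clamp s = 0 := by
  unfold clamp
  rw [min_eq_right (le_trans hs zero_le_one), max_eq_left hs]

lemma continuous_clamp : Continuous clamp :=
  continuous_const.max (continuous_const.min continuous_id)

/-- cutoff function: 1 on `{|τ| ≤ q} ∩ [-r,r]`, 0 outside `{|τ| < q'} ∩ (-r',r')`. -/
def cutoff (τ : ℝ → ℝ) (q q' r r' : ℝ) : ℝ → ℝ := fun x =>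
  clamp ((q' - |τ x|) / (q' - q)) * clamp ((r' - |x|) / (r' - r))

lemma cutoff_continuous (hτc : Continuous τ) (q q' r r' : ℝ) :
    Continuous (cutoff τ q q' r r') := by
  apply Continuous.mul
  · exact continuous_clamp.comp ((continuous_const.sub hτc.abs).div_const _)
  · exact continuous_clamp.comp ((continuous_const.sub continuous_abs).div_const _)

lemma cutoff_nonneg (q q' r r' x : ℝ) : 0 ≤ cutoff τ q q' r r' x :=
  mul_nonneg (clamp_nonneg _) (clamp_nonneg _)

lemma cutoff_le_one (q q' r r' x : ℝ) : cutoff τ q q' r r' x ≤ 1 :=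
  mul_le_one₀ (clamp_le_one _) (clamp_nonneg _) (clamp_le_one _)

lemma cutoff_eq_one {q q' r r' x : ℝ} (hq : q < q') (hr : r < r')
    (h1 : |τ x| ≤ q) (h2 : |x| ≤ r) : cutoff τ q q' r r' x = 1 := by
  unfold cutoff
  rw [clamp_eq_one ((one_le_div (by linarith)).2 (by linarith)),
    clamp_eq_one ((one_le_div (by linarith)).2 (by linarith)), mul_one]

lemma cutoff_fst_eq_zero {q q' r r' x : ℝ} (hq : q < q') (h1 : q' ≤ |τ x|) :
    cutoff τ q q' r r' x = 0 := by
  unfold cutoff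
  rw [clamp_eq_zero (div_nonpos_of_nonpos_of_nonneg (by linarith) (by linarith)), zero_mul]

lemma cutoff_snd_eq_zero {q q' r r' x : ℝ} (hr : r < r') (h2 : r' ≤ |x|) :
    cutoff τ q q' r r' x = 0 := by
  unfold cutoff
  rw [clamp_eq_zero (show (r' - |x|) / (r' - r) ≤ 0 from
    div_nonpos_of_nonpos_of_nonneg (by linarith) (by linarith)), mul_zero]

lemma nice_cutoff_mul (hτc : Continuous τ) {q q' r r' : ℝ} (hq0 : 0 < q) (hq : q < q')
    (hq'1 : q' < 1) (hr : r < r') {G : ℝ → ℝ} (hG : Continuous G) :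
    Nice τ (fun x => cutoff τ q q' r r' x * G x) := by
  refine ⟨(cutoff_continuous hτc q q' r r').mul hG, q', {x | |τ x| ≤ q'} ∩ Set.Icc (-r') r',
    lt_trans hq0 hq, hq'1, IsCompact.inter_left isCompact_Icc
      (isClosed_le (continuous_abs.comp hτc) continuous_const), ?_, fun x hx => hx.1⟩
  intro x hx
  show cutoff τ q q' r r' x * G x = 0
  simp only [Set.mem_inter_iff, Set.mem_setOf_eq, Set.mem_Icc, not_and_or, not_le] at hx
  rcases hx with hx | hx | hx
  · rw [cutoff_fst_eq_zero hq hx.le, zero_mul]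
  · have habs : r' ≤ |x| := le_trans (by linarith) (neg_le_abs x)
    rw [cutoff_snd_eq_zero hr habs, zero_mul]
  · have habs : r' ≤ |x| := le_trans hx.le (le_abs_self x)
    rw [cutoff_snd_eq_zero hr habs, zero_mul]

/-- countable parameter space for the dense family -/
abbrev Param : Type := ℚ × ℚ × ℚ × ℚ × ℕ × ℕ

lemma mIcc_le (m : ℕ) : (-(m+1) : ℝ) ≤ ((m:ℝ)+1) := by
  have : (0:ℝ) ≤ (m:ℝ)+1 := by positivity
  push_cast
  linarith

/-- extension to `ℝ` of the `j`-th element of a dense sequence of `C([-m-1, m+1], ℝ)`. -/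
def pfun (m j : ℕ) : ℝ → ℝ :=
  Set.IccExtend (mIcc_le m) ⇑(denseSeq (C(Set.Icc (-(m+1) : ℝ) ((m:ℝ)+1), ℝ)) j)

lemma pfun_continuous (m j : ℕ) : Continuous (pfun m j) := by
  unfold pfun Set.IccExtend
  exact (map_continuous _).comp continuous_projIcc

/-- the countable family of candidate approximants -/
def famFun (τ : ℝ → ℝ) (p : Param) : ℝ → ℝ :=
  if h : (0 : ℚ) < p.1 ∧ p.1 < p.2.1 ∧ (p.2.1 : ℚ) < 1 ∧ (0:ℚ) < p.2.2.1 ∧ p.2.2.1 < p.2.2.2.1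
  then fun x => cutoff τ (p.1 : ℝ) (p.2.1 : ℝ) (p.2.2.1 : ℝ) (p.2.2.2.1 : ℝ) x *
    pfun p.2.2.2.2.1 p.2.2.2.2.2 x
  else fun _ => 0

lemma famFun_nice (hτc : Continuous τ) (p : Param) : Nice τ (famFun τ p) := by
  unfold famFun
  split_ifs with h
  · obtain ⟨h1, h2, h3, h4, h5⟩ := h
    exact nice_cutoff_mul hτc (by exact_mod_cast h1) (by exact_mod_cast h2)
      (by exact_mod_cast h3) (by exact_mod_cast h5) (pfun_continuous _ _)
  · exact nice_zero

/-- P2 : every `Nice` function is approximated by the countable family. -/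
lemma nice_approx (hτc : Continuous τ) {h : ℝ → ℝ} (hn : Nice τ h) {δ : ℝ} (hδ : 0 < δ) :
    ∃ p : Param, segalNorm τ (fun x => h x - famFun τ p x) < δ := by
  obtain ⟨hc, ε, K, hε0, hε1, hK, hsupp, hτK⟩ := hn
  -- bound the support
  obtain ⟨R₀, hR₀⟩ := (hK.isBounded).subset_closedBall 0
  set R : ℝ := max R₀ 0 with hRdef
  have hKR : K ⊆ Set.Icc (-R) R := by
    intro x hx
    have hmem := hR₀ hx
    rw [Real.closedBall_eq_Icc] at hmem
    simp only [zero_sub, zero_add] at hmem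
    rw [Set.mem_Icc] at hmem ⊢
    have h1 := hmem.1; have h2 := hmem.2
    exact ⟨by linarith [le_max_left R₀ 0], by linarith [le_max_left R₀ 0]⟩
  -- rational parameters
  obtain ⟨q, hq1, hq2⟩ := exists_rat_btwn hε1
  have hq0 : (0:ℚ) < q := by exact_mod_cast lt_trans hε0 hq1
  obtain ⟨q', hq'1, hq'2⟩ := exists_rat_btwn hq2
  have hqq' : q < q' := by exact_mod_cast hq'1
  obtain ⟨r, hr1⟩ := exists_rat_gt R
  have hr0 : (0:ℚ) < r := by exact_mod_cast lt_of_le_of_lt (le_max_right R₀ 0) hr1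
  obtain ⟨r', hr'1⟩ := exists_rat_gt (r : ℝ)
  have hrr' : r < r' := by exact_mod_cast hr'1
  obtain ⟨m, hm⟩ := exists_nat_ge (r' : ℝ)
  have hmr : (r' : ℝ) ≤ (m:ℝ) + 1 := by linarith
  -- dense sequence approximation
  set I : Set ℝ := Set.Icc (-(m+1) : ℝ) ((m:ℝ)+1) with hIdef
  set δ₂ : ℝ := δ * (1 - (q' : ℝ)) / 2 with hδ₂
  have hδ₂0 : 0 < δ₂ := by
    apply div_pos (mul_pos hδ (by linarith)) two_pos
  obtain ⟨j, hj⟩ := denseRange_iff.1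
    (denseRange_denseSeq (C(I, ℝ))) ((ContinuousMap.mk h hc).restrict I) δ₂ hδ₂0
  have hkey : ∀ x (hx : x ∈ I), |pfun m j x - h x| ≤ δ₂ := by
    intro x hx
    rw [show pfun m j x = (denseSeq (C(I, ℝ)) j) ⟨x, hx⟩ from by
      unfold pfun; rw [Set.IccExtend_of_mem _ _ hx]]
    have hd := ContinuousMap.dist_apply_le_dist (f := (ContinuousMap.mk h hc).restrict I)
      (g := denseSeq (C(I, ℝ)) j) ⟨x, hx⟩
    rw [Real.dist_eq] at hd
    have h2 : |h x - (denseSeq (C(I, ℝ)) j) ⟨x, hx⟩| ≤ δ₂ := le_trans hd hj.le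
    rwa [abs_sub_comm] at h2
  refine ⟨(q, q', r, r', m, j), ?_⟩
  have hcond : (0 : ℚ) < q ∧ q < q' ∧ (q':ℚ) < 1 ∧ (0:ℚ) < r ∧ r < r' := by
    refine ⟨hq0, hqq', by exact_mod_cast hq'2, hr0, hrr'⟩
  have hfam : famFun τ (q, q', r, r', m, j) =
      fun x => cutoff τ (q:ℝ) (q':ℝ) (r:ℝ) (r':ℝ) x * pfun m j x := by
    unfold famFun
    rw [dif_pos hcond]
  rw [hfam]
  set d : ℝ → ℝ := fun x => h x - cutoff τ (q:ℝ) (q':ℝ) (r:ℝ) (r':ℝ) x * pfun m j x with hd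
  -- facts about h
  have hmem : ∀ x, h x ≠ 0 → x ∈ K := fun x hx => by
    by_contra hxK; exact hx (hsupp x hxK)
  have hone : ∀ x, h x ≠ 0 → cutoff τ (q:ℝ) (q':ℝ) (r:ℝ) (r':ℝ) x = 1 := by
    intro x hx
    have hxK := hmem x hx
    apply cutoff_eq_one (by exact_mod_cast hqq') (by exact_mod_cast hrr')
    · exact le_trans (hτK x hxK) (le_of_lt hq1)
    · have := hKR hxK
      rw [Set.mem_Icc] at this
      rw [abs_le]
      constructor <;> [linarith [this.1]; linarith [this.2]]
  -- the difference is small and supported in {|τ| ≤ q'}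
  have hbound : ∀ x, |d x| ≤ δ₂ := by
    intro x
    by_cases hxI : x ∈ I
    · have heq : d x = cutoff τ (q:ℝ) (q':ℝ) (r:ℝ) (r':ℝ) x * (h x - pfun m j x) := by
        by_cases hx0 : h x = 0
        · simp only [hd, hx0]; ring
        · simp only [hd]; rw [hone x hx0]; ring
      rw [heq, abs_mul]
      calc |cutoff τ (q:ℝ) (q':ℝ) (r:ℝ) (r':ℝ) x| * |h x - pfun m j x|
          ≤ 1 * δ₂ := by
            apply mul_le_mul _ _ (abs_nonneg _) zero_le_one
            · rw [abs_of_nonneg (cutoff_nonneg _ _ _ _ _)]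
              exact cutoff_le_one _ _ _ _ _
            · rw [abs_sub_comm]; exact hkey x hxI
        _ = δ₂ := one_mul _
    · -- outside the big interval, both terms vanish
      have hxabs : ((m:ℝ)+1) < |x| := by
        rw [hIdef, Set.mem_Icc, not_and_or] at hxI
        rcases hxI with h1 | h1 <;> push_neg at h1
        · calc ((m:ℝ)+1) < -x := by linarith
            _ ≤ |x| := neg_le_abs x
        · exact lt_of_lt_of_le h1 (le_abs_self x)
      have hcut : cutoff τ (q:ℝ) (q':ℝ) (r:ℝ) (r':ℝ) x = 0 :=
        cutoff_snd_eq_zero (by exact_mod_cast hrr') (le_trans hmr hxabs.le)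
      have hh : h x = 0 := by
        by_contra hx0
        have := hKR (hmem x hx0)
        rw [Set.mem_Icc] at this
        have : |x| ≤ R := abs_le.2 this
        have hRr : R < (r':ℝ) := lt_trans hr1 hr'1
        linarith [le_trans hmr hxabs.le]
      simp only [hd, hcut, hh]
      simp
      exact hδ₂0.le
  have hτd : ∀ x, d x ≠ 0 → |τ x| ≤ (q' : ℝ) := by
    intro x hx
    by_contra hτx
    push_neg at hτx
    apply hx
    have hcut : cutoff τ (q:ℝ) (q':ℝ) (r:ℝ) (r':ℝ) x = 0 :=
      cutoff_fst_eq_zero (by exact_mod_cast hqq') hτx.le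
    have hh : h x = 0 := by
      by_contra hx0
      have := hτK x (hmem x hx0)
      have : |τ x| ≤ (q':ℝ) := le_trans this (by linarith)
      linarith
    simp only [hd, hcut, hh]
    simp
  have hq'0 : (0:ℝ) ≤ (q':ℝ) := by exact_mod_cast (hq0.trans hqq').le
  have hq'1' : (q':ℝ) < 1 := by exact_mod_cast hq'2
  calc segalNorm τ d ≤ δ₂ * (1 - (q':ℝ))⁻¹ := segalNorm_le_geom hbound hτd hq'0 hq'1'
    _ = δ / 2 := by
        have hne : (1 - (q':ℝ)) ≠ 0 := ne_of_gt (by linarith)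
        rw [hδ₂]
        field_simp
    _ < δ := by linarith

end Seg5

noncomputable section Seg6

variable {τ : ℝ → ℝ}

lemma vanish_of_one_le (hτb : ∃ C, ∀ x, |τ x| ≤ C) {g : ℝ → ℝ} (hg : MemSegal τ g)
    {x : ℝ} (hx : 1 ≤ |τ x|) : g x = 0 := by
  by_contra h0
  have ht := tame_of_memSegal hτb hg
  have hlb : ∀ k, |g x| ≤ Mk τ g k := by
    intro k
    refine le_trans ?_ (le_Mk (ht.1 k) x)
    rw [abs_mul, abs_pow]
    calc |g x| = |g x| * 1 := (mul_one _).symm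
      _ ≤ |g x| * |τ x| ^ k := by
          apply mul_le_mul_of_nonneg_left (one_le_pow₀ hx) (abs_nonneg _)
  have h2 : (0:ℝ) < |g x| := abs_pos.2 h0
  obtain ⟨k, hk⟩ := (ht.2.tendsto_atTop_zero.eventually_lt_const h2).exists
  linarith [hlb k]

lemma pointwise_bound (hτb : ∃ C, ∀ x, |τ x| ≤ C) {g : ℝ → ℝ} (hg : MemSegal τ g)
    {ε' : ℝ} (hε'0 : 0 ≤ ε') (hε' : ε' < 1) {x : ℝ} (hτx : ε' ≤ |τ x|) :
    |g x| ≤ segalNorm τ g * (1 - ε') := by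
  have ht := tame_of_memSegal hτb hg
  by_cases h1 : 1 ≤ |τ x|
  · rw [vanish_of_one_le hτb hg h1]
    simp
    exact mul_nonneg (segalNorm_nonneg' g) (by linarith)
  push_neg at h1
  have hsum1 : Summable (fun k : ℕ => |g x| * |τ x| ^ k) :=
    (summable_geometric_of_lt_one (abs_nonneg _) h1).mul_left _
  have hle : |g x| * (1 - |τ x|)⁻¹ ≤ segalNorm τ g := by
    rw [← tsum_geometric_of_lt_one (abs_nonneg _) h1, ← tsum_mul_left]
    apply Summable.tsum_le_tsum _ hsum1 ht.2
    intro k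
    rw [← abs_pow, ← abs_mul]
    exact le_Mk (ht.1 k) x
  have hpos : 0 < 1 - |τ x| := by linarith
  have h3 : |g x| ≤ segalNorm τ g * (1 - |τ x|) := by
    calc |g x| = |g x| * (1 - |τ x|)⁻¹ * (1 - |τ x|) := by field_simp
      _ ≤ segalNorm τ g * (1 - |τ x|) := mul_le_mul_of_nonneg_right hle hpos.le
  exact le_trans h3 (mul_le_mul_of_nonneg_left (by linarith) (segalNorm_nonneg' g))

/-- P1: every element of the Segal algebra is approximated by Nice functions. -/
lemma dense_nice (hτc : Continuous τ) (hτb : ∃ C, ∀ x, |τ x| ≤ C) {g : ℝ → ℝ}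
    (hg : MemSegal τ g) {δ : ℝ} (hδ : 0 < δ) :
    ∃ h, Nice τ h ∧ segalNorm τ (fun x => g x - h x) < δ := by
  have ht := tame_of_memSegal hτb hg
  -- tail cutoff
  obtain ⟨N₀, hN₀⟩ : ∃ N, ∑' k, Mk τ g (k + N) < δ / 4 := by
    have hS := ht.2.hasSum.tendsto_sum_nat
    obtain ⟨N, hN⟩ := (Metric.tendsto_nhds.1 hS (δ/4) (by linarith)).exists
    refine ⟨N, ?_⟩
    have hsp := Summable.sum_add_tsum_nat_add N ht.2
    rw [Real.dist_eq] at hN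
    have := abs_lt.1 hN
    linarith [this.1, this.2]
  set δ'' : ℝ := δ / (4 * ((N₀:ℝ) + 1)) with hδ''def
  have hδ''0 : 0 < δ'' := by positivity
  set sn := segalNorm τ g with hsn
  have hsn0 : 0 ≤ sn := segalNorm_nonneg' g
  set ε' : ℝ := max (1 - δ'' / (sn + 1)) (1/2) with hε'def
  have hε'1 : ε' < 1 := by
    apply max_lt _ (by norm_num)
    have : 0 < δ'' / (sn + 1) := by positivity
    linarith
  have hε'h : (1:ℝ)/2 ≤ ε' := le_max_right _ _
  have hε'0 : 0 ≤ ε' := by linarith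
  have hkey : sn * (1 - ε') ≤ δ'' := by
    have h1 : 1 - ε' ≤ δ'' / (sn + 1) := by
      have := le_max_left (1 - δ'' / (sn + 1)) (1/2)
      linarith
    calc sn * (1 - ε') ≤ sn * (δ'' / (sn + 1)) :=
          mul_le_mul_of_nonneg_left h1 hsn0
      _ = δ'' * (sn / (sn + 1)) := by ring
      _ ≤ δ'' * 1 := by
          apply mul_le_mul_of_nonneg_left _ hδ''0.le
          exact (div_le_one (by linarith)).2 (by linarith)
      _ = δ'' := mul_one _
  -- far-away bound
  obtain ⟨R, hR0, hfar⟩ : ∃ R, 0 ≤ R ∧ ∀ x, R < |x| → |g x| ≤ δ'' := by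
    have h1 : {x : ℝ | dist (g x) 0 < δ''} ∈ cocompact ℝ :=
      hg.2.1 (Metric.ball_mem_nhds 0 hδ''0)
    obtain ⟨C, hC, hCs⟩ := mem_cocompact.1 h1
    obtain ⟨R₀, hR₀⟩ := hC.isBounded.subset_closedBall 0
    refine ⟨max R₀ 0, le_max_right _ _, fun x hx => ?_⟩
    have hxC : x ∉ C := by
      intro hxC
      have := hR₀ hxC
      rw [Metric.mem_closedBall, Real.dist_eq, sub_zero] at this
      exact absurd (le_trans this (le_max_left _ _)) (not_le.2 hx)
    have := hCs hxC
    simp only [Set.mem_setOf_eq, Real.dist_eq, sub_zero] at this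
    exact this.le
  set q : ℝ := ε' with hqdef
  set q' : ℝ := (ε' + 1) / 2 with hq'def
  set r : ℝ := R + 1 with hrdef
  set r' : ℝ := R + 2 with hr'def
  have hq0 : 0 < q := by rw [hqdef]; linarith
  have hqq' : q < q' := by rw [hqdef, hq'def]; linarith
  have hq'1 : q' < 1 := by rw [hq'def]; linarith
  have hrr' : r < r' := by rw [hrdef, hr'def]; linarith
  set h : ℝ → ℝ := fun x => cutoff τ q q' r r' x * g x with hhdef
  have hnice : Nice τ h := nice_cutoff_mul hτc hq0 hqq' hq'1 hrr' hg.1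
  refine ⟨h, hnice, ?_⟩
  set d : ℝ → ℝ := fun x => g x - h x with hddef
  have htd : Tame τ d := ht.sub (hnice.tame hτb)
  have hdfac : ∀ x, d x = (1 - cutoff τ q q' r r' x) * g x := by
    intro x
    simp only [hddef, hhdef]
    ring
  have habs_d : ∀ x, |d x| ≤ |g x| := by
    intro x
    rw [hdfac x, abs_mul]
    have h1 : |1 - cutoff τ q q' r r' x| ≤ 1 := by
      rw [abs_of_nonneg (by linarith [cutoff_le_one (τ := τ) q q' r r' x])]
      linarith [cutoff_nonneg (τ := τ) q q' r r' x]
    calc |1 - cutoff τ q q' r r' x| * |g x| ≤ 1 * |g x| :=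
          mul_le_mul_of_nonneg_right h1 (abs_nonneg _)
      _ = |g x| := one_mul _
  have hMk_all : ∀ k, Mk τ d k ≤ δ'' := by
    intro k
    apply Mk_le hδ''0.le
    intro x
    by_cases hτ1 : 1 ≤ |τ x|
    · have hg0 : g x = 0 := vanish_of_one_le hτb hg hτ1
      rw [hdfac x, hg0]
      simp
      exact hδ''0.le
    push_neg at hτ1
    by_cases hgood : |τ x| ≤ q ∧ |x| ≤ r
    · have h1 : cutoff τ q q' r r' x = 1 := cutoff_eq_one hqq' hrr' hgood.1 hgood.2
      rw [hdfac x, h1]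
      simp
      exact hδ''0.le
    · have hgb : |g x| ≤ δ'' := by
        rcases not_and_or.1 hgood with hc1 | hc1 <;> push_neg at hc1
        · exact le_trans (pointwise_bound hτb hg hε'0 hε'1 hc1.le) hkey
        · apply hfar x
          rw [hrdef] at hc1
          linarith
      rw [abs_mul, abs_pow]
      calc |d x| * |τ x| ^ k ≤ δ'' * 1 := by
            apply mul_le_mul (le_trans (habs_d x) hgb)
              (pow_le_one₀ (abs_nonneg _) hτ1.le) (by positivity) hδ''0.le
        _ = δ'' := mul_one _
  have hMk_g : ∀ k, Mk τ d k ≤ Mk τ g k := by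
    intro k
    apply Mk_le (Mk_nonneg g k)
    intro x
    rw [abs_mul]
    exact le_trans (mul_le_mul_of_nonneg_right (habs_d x) (abs_nonneg _))
      (by rw [← abs_mul]; exact le_Mk (ht.1 k) x)
  have hsplit := Summable.sum_add_tsum_nat_add N₀ htd.2
  have hfin : ∑ k ∈ Finset.range N₀, Mk τ d k ≤ (N₀:ℝ) * δ'' := by
    calc ∑ k ∈ Finset.range N₀, Mk τ d k ≤ (Finset.range N₀).card • δ'' :=
          Finset.sum_le_card_nsmul _ _ _ (fun k _ => hMk_all k)
      _ = (N₀:ℝ) * δ'' := by rw [Finset.card_range, nsmul_eq_mul]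
  have htail : ∑' k, Mk τ d (k + N₀) ≤ ∑' k, Mk τ g (k + N₀) :=
    Summable.tsum_le_tsum (fun k => hMk_g (k + N₀)) ((summable_nat_add_iff N₀).2 htd.2)
      ((summable_nat_add_iff N₀).2 ht.2)
  have hNδ : (N₀:ℝ) * δ'' ≤ δ / 4 := by
    have h1 : (N₀:ℝ) / ((N₀:ℝ) + 1) ≤ 1 := (div_le_one (by positivity)).2 (by linarith)
    calc (N₀:ℝ) * δ'' = (δ/4) * ((N₀:ℝ) / ((N₀:ℝ)+1)) := by
          rw [hδ''def]; field_simp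
      _ ≤ (δ/4) * 1 := mul_le_mul_of_nonneg_left h1 (by linarith)
      _ = δ/4 := mul_one _
  have : segalNorm τ d = ∑ k ∈ Finset.range N₀, Mk τ d k + ∑' k, Mk τ d (k + N₀) :=
    hsplit.symm
  rw [show segalNorm τ (fun x => g x - h x) = segalNorm τ d from rfl, this]
  linarith

/-- combined density of the countable family -/
lemma dense_param (hτc : Continuous τ) (hτb : ∃ C, ∀ x, |τ x| ≤ C) {g : ℝ → ℝ}
    (hg : MemSegal τ g) {δ : ℝ} (hδ : 0 < δ) :
    ∃ p : Param, segalNorm τ (fun x => g x - famFun τ p x) < δ := by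
  obtain ⟨h, hn, h1⟩ := dense_nice hτc hτb hg (half_pos hδ)
  obtain ⟨p, h2⟩ := nice_approx hτc hn (half_pos hδ)
  refine ⟨p, lt_of_le_of_lt (segalNorm_triangle (b := h) ?_ ?_) (by linarith)⟩
  · exact (tame_of_memSegal hτb hg).sub (hn.tame hτb)
  · exact (hn.tame hτb).sub ((famFun_nice hτc p).tame hτb)

end Seg6

noncomputable section Seg7

variable {τ w : ℝ → ℝ} {α : ℝ ≃ₜ ℝ}

lemma iter_T_add (n : ℕ) (a b : ℝ → ℝ) (x : ℝ) :
    (TT w α)^[n] (fun y => a y + b y) x = (TT w α)^[n] a x + (TT w α)^[n] b x := by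
  rw [iter_T, iter_T, iter_T]
  ring

lemma summable_pointwise {v : ℕ → ℝ → ℝ} (hv : ∀ i, Tame τ (v i))
    (hs : Summable fun i => segalNorm τ (v i)) (x : ℝ) :
    Summable (fun i => v i x) :=
  Summable.of_norm_bounded hs (fun i => by
    rw [Real.norm_eq_abs]; exact abs_le_segalNorm (hv i) x)

/-- the limit lemma : `segalNorm` of a pointwise sum of a series -/
lemma tame_tsum_le (v : ℕ → ℝ → ℝ) (hv : ∀ i, Tame τ (v i))
    (hs : Summable fun i => segalNorm τ (v i)) :
    Tame τ (fun x => ∑' i, v i x) ∧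
      segalNorm τ (fun x => ∑' i, v i x) ≤ ∑' i, segalNorm τ (v i) := by
  have hsM : ∀ k, Summable fun i => Mk τ (v i) k := by
    intro k
    exact Summable.of_nonneg_of_le (fun i => Mk_nonneg _ _)
      (fun i => Mk_le_segalNorm (hv i) k) hs
  have hMkb : ∀ k x, |(∑' i, v i x) * τ x ^ k| ≤ ∑' i, Mk τ (v i) k := by
    intro k x
    rw [← tsum_mul_right]
    have hsn : Summable fun i => ‖v i x * τ x ^ k‖ := by
      apply Summable.of_nonneg_of_le (fun i => norm_nonneg _) _ (hsM k)
      intro i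
      rw [Real.norm_eq_abs]
      exact le_Mk ((hv i).1 k) x
    calc |∑' i, v i x * τ x ^ k| ≤ ∑' i, ‖v i x * τ x ^ k‖ :=
          norm_tsum_le_tsum_norm hsn
      _ ≤ ∑' i, Mk τ (v i) k := by
          apply Summable.tsum_le_tsum _ hsn (hsM k)
          intro i
          rw [Real.norm_eq_abs]
          exact le_Mk ((hv i).1 k) x
  have hprod : Summable (fun p : ℕ × ℕ => Mk τ (v p.1) p.2) := by
    apply (summable_prod_of_nonneg (fun p => Mk_nonneg _ _)).2
    exact ⟨fun i => (hv i).2, hs⟩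
  have hswap : Summable (fun k => ∑' i, Mk τ (v i) k) := by
    have h1 := hprod.prod_symm
    exact ((summable_prod_of_nonneg (fun p => Mk_nonneg _ _)).1 h1).2
  have hswap_eq : ∑' k, ∑' i, Mk τ (v i) k = ∑' i, ∑' k, Mk τ (v i) k := by
    exact Summable.tsum_comm' hprod (fun i => (hv i).2) (fun k => hsM k)
  have htame : Tame τ (fun x => ∑' i, v i x) := by
    constructor
    · intro k
      refine ⟨∑' i, Mk τ (v i) k, ?_⟩
      rintro y ⟨x, rfl⟩
      exact hMkb k x
    · apply Summable.of_nonneg_of_le (fun k => Mk_nonneg _ _) _ hswap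
      intro k
      exact Mk_le (tsum_nonneg (fun i => Mk_nonneg _ _)) (hMkb k)
  refine ⟨htame, ?_⟩
  calc segalNorm τ (fun x => ∑' i, v i x) ≤ ∑' k, ∑' i, Mk τ (v i) k :=
        Summable.tsum_le_tsum (fun k => Mk_le (tsum_nonneg (fun i => Mk_nonneg _ _)) (hMkb k))
          htame.2 hswap
    _ = ∑' i, ∑' k, Mk τ (v i) k := hswap_eq
    _ = ∑' i, segalNorm τ (v i) := rfl

lemma iterT_tsum (N : ℕ) (v : ℕ → ℝ → ℝ) (x : ℝ) :
    (TT w α)^[N] (fun y => ∑' i, v i y) x = ∑' i, (TT w α)^[N] (v i) x := by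
  rw [iter_T]
  rw [← tsum_mul_left]
  exact tsum_congr fun i => by rw [iter_T]

lemma tails_small {c : ℕ → ℝ} (hc : Summable c) (hnn : ∀ i, 0 ≤ c i) {δ : ℝ} (hδ : 0 < δ) :
    ∃ m, ∑' i, c (i + m) < δ := by
  have hS := hc.hasSum.tendsto_sum_nat
  obtain ⟨m, hm⟩ := (Metric.tendsto_nhds.1 hS δ hδ).exists
  refine ⟨m, ?_⟩
  have hsp := Summable.sum_add_tsum_nat_add m hc
  rw [Real.dist_eq] at hm
  have := abs_lt.1 hm
  linarith [this.1, this.2]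

end Seg7


/-- Under the weight-product decay condition on compact subsets of
`{|τ| ≤ ε}` (for every `ε ∈ (0,1)`), the operator `T_{α,w}(f) = w·(f∘α)` is
hypercyclic on `𝒜_τ`: some `f ∈ 𝒜_τ` has `‖·‖_τ`-dense orbit in `𝒜_τ`. -/
theorem weighted_composition_hypercyclic_on_segal (α : ℝ ≃ₜ ℝ) (τ w : ℝ → ℝ)
    (hτc : Continuous τ) (hτb : ∃ C, ∀ x, |τ x| ≤ C)
    (hinv : ∀ x, τ (α x) = τ x)
    (hwc : Continuous w) (hwpos : ∀ x, 0 < w x)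
    (hwb : ∃ C, ∀ x, |w x| ≤ C) (hwib : ∃ C, ∀ x, |w x|⁻¹ ≤ C)
    (hyp : ∀ ε : ℝ, 0 < ε → ε < 1 → ∀ K : Set ℝ, IsCompact K →
      K ⊆ {x : ℝ | |τ x| ≤ ε} →
      ∃ n : ℕ → ℕ, StrictMono n ∧
        Tendsto (fun k : ℕ =>
            ⨆ t ∈ K, ∏ j ∈ Finset.range (n k),
              |w ((α.toEquiv ^ ((j : ℤ) - (n k : ℤ))) t)|)
          atTop (nhds 0) ∧
        Tendsto (fun k : ℕ =>
            ⨆ t ∈ K, ∏ j ∈ Finset.range (n k), |w ((α.toEquiv ^ (j : ℤ)) t)|⁻¹)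
          atTop (nhds 0)) :
    ∃ f : ℝ → ℝ, MemSegal τ f ∧
      ∀ g : ℝ → ℝ, MemSegal τ g → ∀ ε : ℝ, 0 < ε →
        ∃ n : ℕ,
          segalNorm τ
            (fun x => (fun F : ℝ → ℝ => fun y => w y * F (α y))^[n] f x - g x) < ε := by
  classical
  obtain ⟨Cw₀, hCw₀⟩ := hwb
  set Cw : ℝ := max Cw₀ 1 with hCwdef
  have hCw : ∀ x, |w x| ≤ Cw := fun x => le_trans (hCw₀ x) (le_max_left _ _)
  have hCw1 : (1:ℝ) ≤ Cw := le_max_right _ _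
  have hCw0 : (0:ℝ) < Cw := lt_of_lt_of_le one_pos hCw1
  obtain ⟨Ci, hCi⟩ := hwib
  -- the countable dense family, enumerated with multiplicity
  obtain ⟨e, he⟩ := exists_surjective_nat (ℕ × Param)
  set g : ℕ → ℝ → ℝ := fun i => famFun τ (e i).2 with hgdef
  have hgN : ∀ i, Nice τ (g i) := fun i => famFun_nice hτc _
  -- the inductive step
  have hstep : ∀ (i : ℕ) (f : ℝ → ℝ) (N : ℕ), Nice τ f →
      ∃ (f' : ℝ → ℝ) (N' : ℕ), Nice τ f' ∧ N < N' ∧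
        segalNorm τ (fun x => f' x - f x) ≤ ((1:ℝ)/2)^(i+2) / Cw^N ∧
        segalNorm τ (fun x => (TT w α)^[N'] f' x - g i x) ≤ ((1:ℝ)/2)^(i+2) := by
    intro i f N hf
    obtain ⟨hcf, εf, Kf, hεf0, hεf1, hKf, hsuppf, hτKf⟩ := hf
    have hf : Nice τ f := ⟨hcf, εf, Kf, hεf0, hεf1, hKf, hsuppf, hτKf⟩
    obtain ⟨hcg, εg, Kg, hεg0, hεg1, hKg, hsuppg, hτKg⟩ := hgN i
    set K : Set ℝ := Kf ∪ Kg with hKdef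
    set ε : ℝ := max εf εg with hεdef
    obtain ⟨n, hmono, hB, hD⟩ := hyp ε (lt_max_of_lt_left hεf0) (max_lt hεf1 hεg1)
      K (hKf.union hKg) (by
        rintro x (hx | hx)
        · exact le_trans (hτKf x hx) (le_max_left _ _)
        · exact le_trans (hτKg x hx) (le_max_right _ _))
    set snf := segalNorm τ f with hsnf
    set sng := segalNorm τ (g i) with hsng
    have hsnf0 : 0 ≤ snf := segalNorm_nonneg' f
    have hsng0 : 0 ≤ sng := segalNorm_nonneg' (g i)
    set X₁ : ℝ := ((1:ℝ)/2)^(i+2) with hX₁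
    set X₂ : ℝ := ((1:ℝ)/2)^(i+2) / Cw^N with hX₂
    have hX₁0 : 0 < X₁ := by positivity
    have hX₂0 : 0 < X₂ := by positivity
    set δ₀ : ℝ := min (X₁ / (snf + 1)) (X₂ / (sng + 1)) with hδ₀def
    have hδ₀ : 0 < δ₀ := lt_min (by positivity) (by positivity)
    have hev1 := (hB.eventually_lt_const hδ₀ : ∀ᶠ _ in atTop, _)
    have hev2 := (hD.eventually_lt_const hδ₀ : ∀ᶠ _ in atTop, _)
    have hev3 : ∀ᶠ k in atTop, N < n k :=
      eventually_atTop.2 ⟨N + 1, fun k hk => lt_of_lt_of_le (Nat.lt_succ_self N)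
        (le_trans hk (hmono.le_apply))⟩
    obtain ⟨k, hk1, hk2, hk3⟩ := (hev1.and (hev2.and hev3)).exists
    have hτgK : ∀ x, x ∉ K → g i x = 0 := fun x hx => hsuppg x (fun h => hx (Or.inr h))
    have hτfK : ∀ x, x ∉ K → f x = 0 := fun x hx => hsuppf x (fun h => hx (Or.inl h))
    have htgi : Tame τ (g i) := (hgN i).tame hτb
    have htf : Tame τ f := hf.tame hτb
    refine ⟨fun x => f x + (SS w α)^[n k] (g i) x, n k,
      hf.add ((hgN i).iterS hinv hwc hwpos (n k)), hk3, ?_, ?_⟩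
    · have heq : (fun x => (f x + (SS w α)^[n k] (g i) x) - f x)
          = (SS w α)^[n k] (g i) := funext fun x => by ring
      rw [heq]
      calc segalNorm τ ((SS w α)^[n k] (g i))
          ≤ (⨆ t ∈ K, ∏ j ∈ Finset.range (n k), |w ((α.toEquiv ^ (j : ℤ)) t)|⁻¹) * sng :=
            segalNorm_iterS_le hinv hwpos hCi hτgK htgi (n k)
        _ ≤ δ₀ * (sng + 1) := by
            apply mul_le_mul hk2.le (by linarith) hsng0 hδ₀.le
        _ ≤ (X₂ / (sng + 1)) * (sng + 1) := by
            apply mul_le_mul_of_nonneg_right (min_le_right _ _) (by linarith)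
        _ = X₂ := div_mul_cancel₀ X₂ (by positivity)
    · have heq : (fun x => (TT w α)^[n k] (fun y => f y + (SS w α)^[n k] (g i) y) x - g i x)
          = fun x => (TT w α)^[n k] f x := by
        funext x
        rw [iter_T_add]
        rw [show (TT w α)^[n k] ((SS w α)^[n k] (g i)) = g i from iter_T_S hwpos (n k) (g i)]
        ring
      rw [heq]
      calc segalNorm τ (fun x => (TT w α)^[n k] f x)
          ≤ (⨆ t ∈ K, ∏ j ∈ Finset.range (n k),
              |w ((α.toEquiv ^ ((j:ℤ) - ((n k):ℤ))) t)|) * snf := by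
            exact segalNorm_iterT_le hinv hCw hτfK htf (n k)
        _ ≤ δ₀ * (snf + 1) := by
            apply mul_le_mul hk1.le (by linarith) hsnf0 hδ₀.le
        _ ≤ (X₁ / (snf + 1)) * (snf + 1) := by
            apply mul_le_mul_of_nonneg_right (min_le_left _ _) (by linarith)
        _ = X₁ := div_mul_cancel₀ X₁ (by positivity)
  choose Sf SN hSnice hSlt hSclose hStarget using hstep
  -- the chain
  let C : ℕ → {p : (ℝ → ℝ) × ℕ // Nice τ p.1} := fun n => Nat.rec
    ⟨⟨fun _ => 0, 0⟩, nice_zero⟩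
    (fun i s => ⟨⟨Sf i s.1.1 s.1.2 s.2, SN i s.1.1 s.1.2 s.2⟩, hSnice i s.1.1 s.1.2 s.2⟩) n
  set F : ℕ → ℝ → ℝ := fun i => (C i).1.1 with hFdef
  set Nn : ℕ → ℕ := fun i => (C i).1.2 with hNdef
  have hFnice : ∀ i, Nice τ (F i) := fun i => (C i).2
  have hF0 : F 0 = fun _ => 0 := rfl
  have hlt : ∀ i, Nn i < Nn (i+1) := fun i => hSlt i (F i) (Nn i) (C i).2
  have hclose : ∀ i, segalNorm τ (fun x => F (i+1) x - F i x) ≤ ((1:ℝ)/2)^(i+2) / Cw^(Nn i) :=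
    fun i => hSclose i (F i) (Nn i) (C i).2
  have htarget : ∀ i,
      segalNorm τ (fun x => (TT w α)^[Nn (i+1)] (F (i+1)) x - g i x) ≤ ((1:ℝ)/2)^(i+2) :=
    fun i => hStarget i (F i) (Nn i) (C i).2
  have hNmono : Monotone Nn := monotone_nat_of_le_succ fun i => (hlt i).le
  -- the orbit vector
  set u : ℕ → ℝ → ℝ := fun i x => F (i+1) x - F i x with hudef
  have hut : ∀ i, Tame τ (u i) :=
    fun i => ((hFnice (i+1)).tame hτb).sub ((hFnice i).tame hτb)
  have hCwN1 : ∀ m : ℕ, (1:ℝ) ≤ Cw ^ m := fun m => one_le_pow₀ hCw1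
  have hu2 : ∀ i, segalNorm τ (u i) ≤ ((1:ℝ)/2)^(i+2) := by
    intro i
    refine le_trans (hclose i) ?_
    exact div_le_self (by positivity) (hCwN1 (Nn i))
  have hgeom : Summable (fun i : ℕ => ((1:ℝ)/2)^(i+2)) := by
    have h1 : Summable (fun i : ℕ => ((1:ℝ)/2)^i * ((1:ℝ)/2)^2) :=
      (summable_geometric_of_lt_one (by norm_num) (by norm_num)).mul_right _
    exact h1.congr fun i => by rw [← pow_add]
  have husum : Summable (fun i => segalNorm τ (u i)) :=
    Summable.of_nonneg_of_le (fun i => segalNorm_nonneg' _) hu2 hgeom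
  set f : ℝ → ℝ := fun x => ∑' i, u i x with hfdef
  obtain ⟨hftame, _⟩ := tame_tsum_le u hut husum
  have hptsum : ∀ x, Summable (fun i => u i x) := summable_pointwise hut husum
  -- partial sums are `F m`
  have hpartial : ∀ m x, ∑ i ∈ Finset.range m, u i x = F m x := by
    intro m x
    have h1 := Finset.sum_range_sub (fun i => F i x) m
    calc ∑ i ∈ Finset.range m, u i x = F m x - F 0 x := h1
      _ = F m x := by rw [hF0]; simp
  have hdiff : ∀ m x, f x - F m x = ∑' i, u (i + m) x := by
    intro m x
    have h1 := Summable.sum_add_tsum_nat_add m (hptsum x)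
    rw [hpartial m x] at h1
    rw [hfdef]
    linarith [h1]
  -- membership of f
  have hfmem : MemSegal τ f := by
    refine ⟨?_, ?_, hftame.2⟩
    · apply continuous_tsum (fun i => ((hFnice (i+1)).1).sub ((hFnice i).1)) husum
      intro i x
      rw [Real.norm_eq_abs]
      exact abs_le_segalNorm (hut i) x
    · rw [Metric.tendsto_nhds]
      intro δ hδ
      obtain ⟨m, hm⟩ := tails_small husum (fun i => segalNorm_nonneg' _) hδ
      obtain ⟨_, εm, Km, _, _, hKm, hsuppm, _⟩ := hFnice m
      apply Filter.mem_of_superset (Filter.mem_cocompact.2 ⟨Km, hKm, subset_rfl⟩)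
      intro x hx
      have hFm0 : F m x = 0 := hsuppm x hx
      have h1 : |f x| ≤ ∑' i, segalNorm τ (u (i + m)) := by
        have h2 : f x = ∑' i, u (i + m) x := by
          have := hdiff m x; rw [hFm0] at this; linarith
        rw [h2]
        have hsn : Summable fun i => ‖u (i + m) x‖ :=
          Summable.of_nonneg_of_le (fun i => norm_nonneg _)
            (fun i => by rw [Real.norm_eq_abs]; exact abs_le_segalNorm (hut _) x)
            ((summable_nat_add_iff m).2 husum)
        calc |∑' i, u (i + m) x| ≤ ∑' i, ‖u (i + m) x‖ := norm_tsum_le_tsum_norm hsn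
          _ ≤ ∑' i, segalNorm τ (u (i + m)) := by
              apply Summable.tsum_le_tsum _ hsn ((summable_nat_add_iff m).2 husum)
              intro i
              rw [Real.norm_eq_abs]
              exact abs_le_segalNorm (hut _) x
      show dist (f x) 0 < δ
      rw [Real.dist_eq, sub_zero]
      exact lt_of_le_of_lt h1 hm
  -- main estimate along the orbit
  have hmain : ∀ j, segalNorm τ (fun x => (TT w α)^[Nn (j+1)] f x - g j x)
      ≤ ((1:ℝ)/2)^(j+1) := by
    intro j
    set N := Nn (j+1) with hNdef2
    set m := j+1 with hmdef
    set v : ℕ → ℝ → ℝ := fun i => (TT w α)^[N] (u (i + m)) with hvdef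
    have hvt : ∀ i, Tame τ (v i) := fun i => (hut (i+m)).iterT hinv hCw N
    have hvb : ∀ i, segalNorm τ (v i) ≤ ((1:ℝ)/2)^(i+m+2) := by
      intro i
      have hNle : N ≤ Nn (i + m) := by rw [hNdef2]; exact hNmono (Nat.le_add_left m i)
      calc segalNorm τ (v i) ≤ Cw^N * segalNorm τ (u (i+m)) :=
            segalNorm_iterT_le_pow hinv hCw (hut (i+m)) N
        _ ≤ Cw^(Nn (i+m)) * segalNorm τ (u (i+m)) :=
            mul_le_mul_of_nonneg_right (pow_le_pow_right₀ hCw1 hNle) (segalNorm_nonneg' _)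
        _ ≤ Cw^(Nn (i+m)) * (((1:ℝ)/2)^(i+m+2) / Cw^(Nn (i+m))) :=
            mul_le_mul_of_nonneg_left (hclose (i+m)) (by positivity)
        _ = ((1:ℝ)/2)^(i+m+2) := mul_div_cancel₀ _ (by positivity)
    have hvsum : Summable (fun i => segalNorm τ (v i)) := by
      apply Summable.of_nonneg_of_le (fun i => segalNorm_nonneg' _) hvb
      have h1 : Summable (fun i : ℕ => ((1:ℝ)/2)^i * ((1:ℝ)/2)^(m+2)) :=
        (summable_geometric_of_lt_one (by norm_num) (by norm_num)).mul_right _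
      exact h1.congr fun i => by rw [← pow_add]; ring_nf
    have hTdiff : ∀ x, (TT w α)^[N] f x - (TT w α)^[N] (F m) x = ∑' i, v i x := by
      intro x
      rw [← iter_T_sub]
      have h2 : (fun y => f y - F m y) = fun y => ∑' i, u (i + m) y :=
        funext fun y => hdiff m y
      rw [h2, iterT_tsum]
    have htail : ∑' i, segalNorm τ (v i) ≤ ((1:ℝ)/2)^(m+1) := by
      have h2 : ∑' i : ℕ, ((1:ℝ)/2)^(i+m+2) = ((1:ℝ)/2)^(m+1) := by
        have h3 : ∀ i : ℕ, ((1:ℝ)/2)^(i+m+2) = ((1:ℝ)/2)^i * ((1:ℝ)/2)^(m+2) := by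
          intro i; rw [← pow_add]; ring_nf
        rw [tsum_congr h3, tsum_mul_right, tsum_geometric_of_lt_one (by norm_num) (by norm_num)]
        rw [show ((1:ℝ) - 1/2)⁻¹ = 2 by norm_num]
        rw [show (m+2) = (m+1)+1 by omega, pow_succ]
        ring
      refine le_trans (Summable.tsum_le_tsum hvb hvsum ?_) (le_of_eq h2)
      have h1 : Summable (fun i : ℕ => ((1:ℝ)/2)^i * ((1:ℝ)/2)^(m+2)) :=
        (summable_geometric_of_lt_one (by norm_num) (by norm_num)).mul_right _
      exact h1.congr fun i => by rw [← pow_add]; ring_nf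
    obtain ⟨hvtame, hvle⟩ := tame_tsum_le v hvt hvsum
    have hfun : (fun x => (TT w α)^[N] f x - g j x)
        = fun x => (∑' i, v i x) + ((TT w α)^[N] (F m) x - g j x) := by
      funext x
      rw [← hTdiff x]
      ring
    rw [hfun]
    have htame2 : Tame τ (fun x => (TT w α)^[N] (F m) x - g j x) :=
      (((hFnice m).iterT hinv hwc N).tame hτb).sub ((hgN j).tame hτb)
    calc segalNorm τ (fun x => (∑' i, v i x) + ((TT w α)^[N] (F m) x - g j x))
        ≤ segalNorm τ (fun x => ∑' i, v i x)
          + segalNorm τ (fun x => (TT w α)^[N] (F m) x - g j x) :=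
          segalNorm_add_le hvtame htame2
      _ ≤ ((1:ℝ)/2)^(m+1) + ((1:ℝ)/2)^(j+2) :=
          add_le_add (le_trans hvle htail) (htarget j)
      _ = ((1:ℝ)/2)^(j+1) := by
          rw [hmdef]
          rw [show (j+1+1) = (j+2) by omega]
          rw [show (j+2) = (j+1)+1 by omega, pow_succ]
          ring
  -- each parameter occurs at indices ≥ any bound
  have hio : ∀ (p : Param) (M : ℕ), ∃ j, M ≤ j ∧ (e j).2 = p := by
    intro p M
    have hι : ∀ m : ℕ, ∃ j, e j = (m, p) := fun m => he (m, p)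
    choose ι hι using hι
    have hinj : Function.Injective ι := fun a b hab => by
      have h1 : (a, p) = (b, p) := by rw [← hι a, ← hι b, hab]
      exact (Prod.ext_iff.1 h1).1
    by_contra hcon
    push_neg at hcon
    have hall : ∀ m, ι m < M := by
      intro m
      by_contra hge
      push_neg at hge
      exact hcon (ι m) hge (by rw [hι m])
    have hcard := Finset.card_le_card_of_injOn ι
      (fun m _ => Finset.mem_range.2 (hall m)) (hinj.injOn)
      (s := Finset.range (M+1)) (t := Finset.range M)
    simp only [Finset.card_range] at hcard
    omega
  -- conclusion
  refine ⟨f, hfmem, ?_⟩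
  intro G hG ε hε
  obtain ⟨p, hp⟩ := dense_param hτc hτb hG (half_pos hε)
  obtain ⟨M, hM⟩ := exists_pow_lt_of_lt_one (half_pos hε) (show (1:ℝ)/2 < 1 by norm_num)
  obtain ⟨j, hjM, hjp⟩ := hio p M
  refine ⟨Nn (j+1), ?_⟩
  show segalNorm τ (fun x => (TT w α)^[Nn (j+1)] f x - G x) < ε
  have hgj : g j = famFun τ p := by rw [hgdef]; simp [hjp]
  have htameA : Tame τ (fun x => (TT w α)^[Nn (j+1)] f x - g j x) := by
    have h1 : Tame τ ((TT w α)^[Nn (j+1)] f) :=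
      (tame_of_memSegal hτb hfmem).iterT hinv hCw _
    exact h1.sub ((hgN j).tame hτb)
  have htameB : Tame τ (fun x => g j x - G x) :=
    ((hgN j).tame hτb).sub (tame_of_memSegal hτb hG)
  have htri := segalNorm_triangle (a := fun x => (TT w α)^[Nn (j+1)] f x)
    (b := g j) (c := G) htameA htameB
  have h1 : segalNorm τ (fun x => (TT w α)^[Nn (j+1)] f x - g j x) ≤ ((1:ℝ)/2)^(j+1) :=
    hmain j
  have h2 : ((1:ℝ)/2)^(j+1) ≤ ((1:ℝ)/2)^M :=
    pow_le_pow_of_le_one (by norm_num) (by norm_num) (by omega)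
  have h3 : segalNorm τ (fun x => g j x - G x) < ε/2 := by
    rw [segalNorm_sub_comm, hgj]
    exact hp
  calc segalNorm τ (fun x => (TT w α)^[Nn (j+1)] f x - G x)
      ≤ segalNorm τ (fun x => (TT w α)^[Nn (j+1)] f x - g j x)
        + segalNorm τ (fun x => g j x - G x) := htri
    _ < ((1:ℝ)/2)^M + ε/2 := by
        apply add_lt_add_of_le_of_lt (le_trans h1 h2) h3
    _ < ε := by linarith
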